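/- If X is a space with a strong rank 2-diagonal, then |X| ≤ wL(X)^{πχ(X)}. -/

import Mathlib

open Set Topology

universe u

namespace DiagonalPaper

/-- The star of a set `A` with respect to a family `𝒰`:
the union of all members of `𝒰` meeting `A`. -/
def st {X : Type u} (A : Set X) (𝒰 : Set (Set X)) : Set X :=
  ⋃₀ {U | U ∈ 𝒰 ∧ (U ∩ A).Nonempty}

/-- Iterated star `Stⁿ(A, 𝒰)`. -/
def stn {X : Type u} (n : ℕ) (A : Set X) (𝒰 : Set (Set X)) : Set X :=
  (fun B => st B 𝒰)^[n] A

/-- `𝒰` is an open cover of the space `X`. -/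
def IsOpenCover {X : Type u} [TopologicalSpace X] (𝒰 : Set (Set X)) : Prop :=
  (∀ U ∈ 𝒰, IsOpen U) ∧ ⋃₀ 𝒰 = Set.univ

/-- The weak Lindelöf number of `X` (by convention at least `ℵ₀`): the least `κ` such that
every open cover has a subfamily of size at most `κ` with dense union. -/
noncomputable def weakLindelof (X : Type u) [TopologicalSpace X] : Cardinal.{u} :=
  Cardinal.aleph0 ⊔ sInf {κ | ∀ 𝒰 : Set (Set X), IsOpenCover 𝒰 →
    ∃ 𝒱 ⊆ 𝒰, Cardinal.mk ↥𝒱 ≤ κ ∧ Dense (⋃₀ 𝒱)}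

/-- `B` is a local π-base at `x`: a family of nonempty open sets such that
every open neighbourhood of `x` contains a member of `B`. -/
def IsPiBaseAt {X : Type u} [TopologicalSpace X] (x : X) (B : Set (Set X)) : Prop :=
  (∀ V ∈ B, IsOpen V ∧ V.Nonempty) ∧
    ∀ U : Set X, IsOpen U → x ∈ U → ∃ V ∈ B, V ⊆ U

/-- The π-character of `X` (by convention at least `ℵ₀`): the supremum over `x ∈ X` of the
least cardinality of a local π-base at `x`. -/
noncomputable def piCharacter (X : Type u) [TopologicalSpace X] : Cardinal.{u} :=
  Cardinal.aleph0 ⊔ ⨆ x : X, sInf {κ | ∃ B : Set (Set X), IsPiBaseAt x B ∧ Cardinal.mk ↥B ≤ κ}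

/-- `X` has a rank `n`-diagonal: a sequence `{𝒰_k : k < ω}` of open covers such that
for all `x ≠ y` there is `k` with `y ∉ Stⁿ(x, 𝒰_k)`. -/
def HasRankNDiagonal (X : Type u) [TopologicalSpace X] (n : ℕ) : Prop :=
  ∃ 𝒰 : ℕ → Set (Set X), (∀ k, IsOpenCover (𝒰 k)) ∧
    ∀ x y : X, x ≠ y → ∃ k, y ∉ stn n {x} (𝒰 k)

/-- `X` has a strong rank `n`-diagonal: a sequence `{𝒰_k : k < ω}` of open covers such that
for all `x ≠ y` there is `k` with `y ∉ cl(Stⁿ(x, 𝒰_k))`. -/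
def HasStrongRankNDiagonal (X : Type u) [TopologicalSpace X] (n : ℕ) : Prop :=
  ∃ 𝒰 : ℕ → Set (Set X), (∀ k, IsOpenCover (𝒰 k)) ∧
    ∀ x y : X, x ≠ y → ∃ k, y ∉ closure (stn n {x} (𝒰 k))

/-- if `X` has a strong rank 2-diagonal, then `|X| ≤ wL(X)^{πχ(X)}`. -/
theorem card_le_weakLindelof_pow_piCharacter_of_strongRank2
    (X : Type u) [TopologicalSpace X]
    (h : HasStrongRankNDiagonal X 2) :
    Cardinal.mk X ≤ weakLindelof X ^ piCharacter X := by
  classical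
  rcases isEmpty_or_nonempty X with hX | hX
  · simp [Cardinal.mk_eq_zero X]
  obtain ⟨𝒰, hcov, hdiag⟩ := h
  set κ := weakLindelof X with hκdef
  set lam := piCharacter X with hlamdef
  have hκ0 : Cardinal.aleph0 ≤ κ := le_sup_left
  have hlam0 : Cardinal.aleph0 ≤ lam := le_sup_left
  -- weak Lindelöf selections
  have hWL : ∀ n : ℕ, ∃ 𝒱 ⊆ 𝒰 n, Cardinal.mk ↥𝒱 ≤ κ ∧ Dense (⋃₀ 𝒱) := by
    intro n
    have hne : {c : Cardinal.{u} | ∀ 𝒞 : Set (Set X), IsOpenCover 𝒞 →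
        ∃ 𝒱 ⊆ 𝒞, Cardinal.mk ↥𝒱 ≤ c ∧ Dense (⋃₀ 𝒱)}.Nonempty :=
      ⟨Cardinal.mk (Set X), fun 𝒞 h𝒞 =>
        ⟨𝒞, subset_rfl, Cardinal.mk_set_le _, by rw [h𝒞.2]; exact dense_univ⟩⟩
    obtain ⟨𝒱, h1, h2, h3⟩ := csInf_mem hne (𝒰 n) (hcov n)
    exact ⟨𝒱, h1, h2.trans le_sup_right, h3⟩
  choose 𝒱 h𝒱sub h𝒱card h𝒱dense using hWL
  -- π-bases of size ≤ lam
  have hPi : ∀ x : X, ∃ B : Set (Set X), IsPiBaseAt x B ∧ Cardinal.mk ↥B ≤ lam := by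
    intro x
    have hne : {c : Cardinal.{u} | ∃ B : Set (Set X),
        IsPiBaseAt x B ∧ Cardinal.mk ↥B ≤ c}.Nonempty :=
      ⟨Cardinal.mk (Set X), {V | IsOpen V ∧ V.Nonempty},
        ⟨fun V hV => hV, fun U hU hxU => ⟨U, ⟨hU, ⟨x, hxU⟩⟩, subset_rfl⟩⟩,
        Cardinal.mk_set_le _⟩
    obtain ⟨B, hB, hBle⟩ := csInf_mem hne
    refine ⟨B, hB, hBle.trans ?_⟩
    exact (le_ciSup (Cardinal.bddAbove_range _) x).trans le_sup_right
  choose B hB hBcard using hPi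
  have hBne : ∀ x : X, Nonempty ↥(B x) := by
    intro x
    obtain ⟨V, hV, -⟩ := (hB x).2 univ isOpen_univ (mem_univ x)
    exact ⟨⟨V, hV⟩⟩
  -- uniform indexing of π-bases
  have hBemb : ∀ x : X, ∃ e : ↥(B x) → lam.out, Function.Injective e := by
    intro x
    have hle : Cardinal.mk ↥(B x) ≤ Cardinal.mk lam.out := by
      rw [Cardinal.mk_out]; exact hBcard x
    obtain ⟨e⟩ := Cardinal.le_def _ _ |>.1 hle
    exact ⟨e, e.injective⟩
  choose e he using hBemb
  let v : (x : X) → lam.out → Set X :=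
    fun x i => ((@Function.invFun _ _ (hBne x) (e x) i : ↥(B x)) : Set X)
  have hv_mem : ∀ x i, v x i ∈ B x := fun x i =>
    (@Function.invFun _ _ (hBne x) (e x) i).2
  have hv_surj : ∀ x, ∀ V ∈ B x, ∃ i, v x i = V := by
    intro x V hV
    refine ⟨e x ⟨V, hV⟩, ?_⟩
    have := @Function.leftInverse_invFun _ _ (hBne x) _ (he x) ⟨V, hV⟩
    simp only [v, this]
  -- the coding function
  have hFex : ∀ (x : X) (i : lam.out) (n : ℕ), ∃ o : Option (Set X),
      (∀ W, o = some W → W ∈ 𝒱 n ∧ (W ∩ v x i).Nonempty ∧ v x i ⊆ st {x} (𝒰 n)) ∧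
      (v x i ⊆ st {x} (𝒰 n) → o ≠ none) := by
    intro x i n
    by_cases hc : v x i ⊆ st {x} (𝒰 n)
    · obtain ⟨hvo, hvne⟩ := (hB x).1 _ (hv_mem x i)
      obtain ⟨z, hz1, hz2⟩ := (h𝒱dense n).inter_open_nonempty _ hvo hvne
      obtain ⟨W, hW, hzW⟩ := hz2
      refine ⟨some W, ?_, fun _ => by simp⟩
      rintro W' hW'
      rw [Option.some.injEq] at hW'
      subst hW'
      exact ⟨hW, ⟨z, hzW, hz1⟩, hc⟩
    · exact ⟨none, fun W hW => by simp at hW, fun h' => absurd h' hc⟩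
  choose F hF1 hF2 using hFex
  -- injectivity
  have hFinj : Function.Injective F := by
    intro x y hxy
    by_contra hne'
    obtain ⟨n, hn⟩ := hdiag x y hne'
    have hyU : y ∈ ⋃₀ 𝒰 n := by rw [(hcov n).2]; trivial
    obtain ⟨U, hU, hyUmem⟩ := hyU
    have hopen : IsOpen ((closure (stn 2 ({x} : Set X) (𝒰 n)))ᶜ ∩ U) :=
      (isClosed_closure.isOpen_compl).inter ((hcov n).1 U hU)
    obtain ⟨V, hVB, hVsub⟩ := (hB y).2 _ hopen ⟨hn, hyUmem⟩
    obtain ⟨i, hvi⟩ := hv_surj y V hVB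
    have hsub : v y i ⊆ st {y} (𝒰 n) := by
      rw [hvi]
      intro z hz
      exact ⟨U, ⟨hU, ⟨y, hyUmem, rfl⟩⟩, (hVsub hz).2⟩
    have hFy := hF2 y i n hsub
    cases hFocase : F y i n with
    | none => exact hFy hFocase
    | some W =>
      have hx' : F x i n = some W := by rw [hxy]; exact hFocase
      obtain ⟨hW𝒱, hWx, hxsub⟩ := hF1 x i n W hx'
      obtain ⟨-, hWy, -⟩ := hF1 y i n W hFocase
      have h2eq : stn 2 ({x} : Set X) (𝒰 n) = st (st ({x} : Set X) (𝒰 n)) (𝒰 n) := rfl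
      have hWsub : W ⊆ stn 2 ({x} : Set X) (𝒰 n) := by
        rw [h2eq]
        intro z hz
        obtain ⟨w, hw1, hw2⟩ := hWx
        exact ⟨W, ⟨(h𝒱sub n) hW𝒱, ⟨w, hw1, hxsub hw2⟩⟩, hz⟩
      obtain ⟨z, hzW, hzv⟩ := hWy
      have hz1 : z ∈ closure (stn 2 ({x} : Set X) (𝒰 n)) := subset_closure (hWsub hzW)
      have hz2 := (hVsub (hvi ▸ hzv)).1
      exact hz2 hz1
  -- restrict the codomain
  let S₀ : Set (Option (Set X)) := insert none (some '' ⋃ n, 𝒱 n)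
  have hmemS : ∀ x i n, F x i n ∈ S₀ := by
    intro x i n
    cases hc : F x i n with
    | none => exact mem_insert _ _
    | some W => exact mem_insert_of_mem _ ⟨W, mem_iUnion.2 ⟨n, (hF1 x i n W hc).1⟩, rfl⟩
  let G : X → lam.out → ULift.{u} ℕ → ↥S₀ := fun x i n => ⟨F x i n.down, hmemS x i n.down⟩
  have hGinj : Function.Injective G := by
    intro x y hxy
    apply hFinj
    funext i n
    exact congrArg Subtype.val (congrFun (congrFun hxy i) ⟨n⟩)
  have hcard : Cardinal.mk X ≤ Cardinal.mk (lam.out → ULift.{u} ℕ → ↥S₀) :=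
    Cardinal.mk_le_of_injective hGinj
  -- bound the codomain cardinality
  have hS₀ : Cardinal.mk ↥S₀ ≤ κ := by
    have h1 : Cardinal.mk ↥S₀ ≤ Cardinal.mk ↥(some '' ⋃ n, 𝒱 n) + 1 := Cardinal.mk_insert_le
    have h2 : Cardinal.mk ↥(some '' ⋃ n, 𝒱 n) ≤ Cardinal.mk ↥(⋃ n, 𝒱 n) :=
      Cardinal.mk_image_le
    have hUeq : (⋃ n, 𝒱 n) = ⋃ m : ULift.{u} ℕ, 𝒱 m.down := by
      ext z
      simp only [mem_iUnion]
      exact ⟨fun ⟨n, hn⟩ => ⟨⟨n⟩, hn⟩, fun ⟨m, hm⟩ => ⟨m.down, hm⟩⟩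
    have h3 : Cardinal.mk ↥(⋃ n, 𝒱 n) ≤ κ := by
      rw [hUeq]
      calc Cardinal.mk ↥(⋃ m : ULift.{u} ℕ, 𝒱 m.down)
          ≤ Cardinal.mk (ULift.{u} ℕ) * ⨆ m : ULift.{u} ℕ, Cardinal.mk ↥(𝒱 m.down) :=
            Cardinal.mk_iUnion_le _
        _ ≤ Cardinal.aleph0 * κ := by
            apply mul_le_mul'
            · exact le_of_eq (Cardinal.mk_eq_aleph0 _)
            · exact ciSup_le' fun m => h𝒱card m.down
        _ = κ := Cardinal.aleph0_mul_eq hκ0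
    calc Cardinal.mk ↥S₀ ≤ Cardinal.mk ↥(⋃ n, 𝒱 n) + 1 := h1.trans (add_le_add h2 le_rfl)
      _ ≤ κ + 1 := add_le_add h3 le_rfl
      _ = κ := Cardinal.add_one_eq hκ0
  -- compute
  have heq : Cardinal.mk (lam.out → ULift.{u} ℕ → ↥S₀)
      = (Cardinal.mk ↥S₀ ^ (Cardinal.aleph0 : Cardinal.{u})) ^ lam := by
    rw [← Cardinal.power_def, ← Cardinal.power_def, Cardinal.mk_out,
      Cardinal.mk_eq_aleph0 (ULift.{u} ℕ)]
  calc Cardinal.mk X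
      ≤ (Cardinal.mk ↥S₀ ^ (Cardinal.aleph0 : Cardinal.{u})) ^ lam := heq ▸ hcard
    _ = Cardinal.mk ↥S₀ ^ ((Cardinal.aleph0 : Cardinal.{u}) * lam) :=
        Cardinal.power_mul.symm
    _ = Cardinal.mk ↥S₀ ^ lam := by rw [Cardinal.aleph0_mul_eq hlam0]
    _ ≤ κ ^ lam := Cardinal.power_le_power_right hS₀


end DiagonalPaper
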